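/- In the Weyl group W of a root system (more generally, in any Coxeter group with longest element or any Coxeter group), if w ∈ W satisfies ℓ(w) ≤ ℓ(w₀) − 2 where w₀ is the longest element, then there exist distinct elements w₁ ≠ w₂ in W with w < w₁, w < w₂ (Bruhat order) and ℓ(w₁) = ℓ(w₂) = ℓ(w) + 1. -/

import Mathlib

namespace BGGAux

open CoxeterSystem List

variable {B W : Type*} [Group W] {M : CoxeterMatrix B} (cs : CoxeterSystem M W)

attribute [local instance] Classical.propDecidable

local prefix:100 "s" => cs.simple
local prefix:100 "π" => cs.wordProd
local prefix:100 "ℓ" => cs.length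
local prefix:100 "ris" => cs.rightInvSeq

open Classical in
/-- The sign-cocycle map associated to a simple reflection, as a function. -/
noncomputable def permFun (i : B) : W × ℤˣ → W × ℤˣ :=
  fun p => (s i * p.1 * s i, if p.1 = s i then -p.2 else p.2)

lemma permFun_involutive (i : B) : Function.Involutive (permFun cs i) := by
  have hcancel : ∀ x : W, s i * (s i * x * s i) * s i = x := by
    intro x
    simp [mul_assoc, cs.simple_mul_simple_self, cs.simple_mul_simple_cancel_left]
  rintro ⟨t, ε⟩
  have hiff : (s i * t * s i = s i) ↔ t = s i := by
    constructor
    · intro h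
      have h2 := hcancel t
      rw [h] at h2
      rw [← h2, cs.simple_mul_simple_self, one_mul]
    · rintro rfl
      rw [cs.simple_mul_simple_self, one_mul]
  simp only [permFun]
  rw [hcancel t]
  rw [if_congr hiff rfl rfl]
  by_cases h : t = s i <;> simp [h]

/-- The sign-cocycle permutation. -/
noncomputable def perm (i : B) : Equiv.Perm (W × ℤˣ) :=
  (permFun_involutive cs i).toPerm

lemma perm_apply (i : B) (t : W) (ε : ℤˣ) :
    perm cs i (t, ε) = (s i * t * s i, if t = s i then -ε else ε) := rfl

lemma simple_mul_pow (i j : B) (k : ℕ) :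
    s j * (s i * s j) ^ k = ((s i * s j) ^ k)⁻¹ * s j := by
  have h1 : s j * (s i * s j) * (s j)⁻¹ = (s i * s j)⁻¹ := by
    rw [cs.inv_simple, mul_inv_rev, cs.inv_simple, cs.inv_simple]
    simp [mul_assoc, cs.simple_mul_simple_self]
  have h2 : (s j * (s i * s j) * (s j)⁻¹) ^ k = s j * (s i * s j) ^ k * (s j)⁻¹ := conj_pow
  rw [h1, inv_pow] at h2
  have h3 := congrArg (fun x => x * s j) h2.symm
  simpa [cs.inv_simple, mul_assoc, cs.simple_mul_simple_self] using h3

lemma perm_mul_pow (i j : B) (k : ℕ) (t : W) (ε : ℤˣ) :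
    ((perm cs i * perm cs j) ^ k) (t, ε) =
      ((s i * s j) ^ k * t * ((s i * s j) ^ k)⁻¹,
        (∏ a ∈ Finset.range (2 * k), (if (s i * s j) ^ a * t = s j then (-1 : ℤˣ) else 1)) * ε)
      := by
  induction k with
  | zero => simp
  | succ k ih =>
    set c := s i * s j with hc
    have hsjc : ∀ m : ℕ, s j * c ^ m = (c ^ m)⁻¹ * s j := fun m => simple_mul_pow cs i j m
    have key1 : (c ^ k * t * (c ^ k)⁻¹ = s j) ↔ (c ^ (2 * k) * t = s j) := by
      rw [two_mul, pow_add]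
      constructor
      · intro h
        have : c ^ k * t = s j * c ^ k := by
          have := congrArg (fun x => x * c ^ k) h
          simpa [mul_assoc] using this
        rw [hsjc k] at this
        rw [mul_assoc, this]
        simp [mul_assoc]
      · intro h
        have h' : c ^ k * t = (c ^ k)⁻¹ * s j := by
          have := congrArg (fun x => (c ^ k)⁻¹ * x) h
          simpa [mul_assoc] using this
        rw [← hsjc k] at h'
        rw [h']
        simp [mul_assoc, cs.simple_mul_simple_self]
    have key2 : (s j * (c ^ k * t * (c ^ k)⁻¹) * s j = s i) ↔ (c ^ (2 * k + 1) * t = s j) := by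
      have lhs_iff : (s j * (c ^ k * t * (c ^ k)⁻¹) * s j = s i)
          ↔ (c ^ k * t * (c ^ k)⁻¹ = s j * s i * s j) := by
        constructor
        · intro h
          have := congrArg (fun x => s j * x * s j) h
          simpa [mul_assoc, cs.simple_mul_simple_self, cs.simple_mul_simple_cancel_left]
            using this
        · intro h
          rw [h]
          simp [mul_assoc, cs.simple_mul_simple_self, cs.simple_mul_simple_cancel_left]
      rw [lhs_iff]
      have hji : s j * s i * s j = c⁻¹ * s j := by
        rw [hc, mul_inv_rev, cs.inv_simple, cs.inv_simple]
      rw [hji]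
      constructor
      · intro h
        have h' : c ^ k * t = c⁻¹ * s j * c ^ k := by
          have := congrArg (fun x => x * c ^ k) h
          simpa [mul_assoc] using this
        rw [mul_assoc, hsjc k] at h'
        have : c ^ (2 * k + 1) * t = c ^ (k + 1) * (c ^ k * t) := by
          rw [← mul_assoc, ← pow_add]; ring_nf
        rw [this, h']
        rw [pow_succ]
        group
      · intro h
        have h' : t = (c ^ (2 * k + 1))⁻¹ * s j := by
          have := congrArg (fun x => (c ^ (2 * k + 1))⁻¹ * x) h
          simpa [mul_assoc] using this
        rw [h']
        have expand : c ^ k * ((c ^ (2 * k + 1))⁻¹ * s j) * (c ^ k)⁻¹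
            = c⁻¹ * ((c ^ k)⁻¹ * (s j * (c ^ k)⁻¹)) := by
          rw [(by ring : 2 * k + 1 = k + (k + 1))]
          rw [pow_add, mul_inv_rev]
          group
        rw [expand]
        have h3 : s j * (c ^ k)⁻¹ = c ^ k * s j := by
          have h4 := congrArg (fun x => c ^ k * x * (c ^ k)⁻¹) (hsjc k)
          simpa [mul_assoc] using h4.symm
        rw [h3]
        group
    rw [pow_succ']
    rw [Equiv.Perm.mul_apply, ih, Equiv.Perm.mul_apply]
    rw [perm_apply, perm_apply]
    have hji : s j * s i = c⁻¹ := by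
      rw [hc, mul_inv_rev, cs.inv_simple, cs.inv_simple]
    have eq1 : s i * (s j * (c ^ k * t * (c ^ k)⁻¹) * s j) * s i
        = c ^ (k + 1) * t * (c ^ (k + 1))⁻¹ := by
      have hfree : s i * (s j * (c ^ k * t * (c ^ k)⁻¹) * s j) * s i
          = (s i * s j) * (c ^ k * t * (c ^ k)⁻¹) * (s j * s i) := by group
      rw [hfree, hji, ← hc]
      group
    have eq2 : (2 * (k + 1)) = (2 * k) + 1 + 1 := by ring
    rw [eq2, Finset.prod_range_succ, Finset.prod_range_succ]
    simp only [eq1, key1, key2]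
    by_cases h1 : c ^ (2 * k) * t = s j
    · by_cases h2 : c ^ (2 * k + 1) * t = s j
      · simp only [if_pos h1, if_pos h2]
        simp [mul_assoc, mul_comm, mul_left_comm, neg_mul, mul_neg, neg_neg]
      · simp only [if_pos h1, if_neg h2]
        simp [mul_assoc, mul_comm, mul_left_comm, neg_mul, mul_neg, neg_neg]
    · by_cases h2 : c ^ (2 * k + 1) * t = s j
      · simp only [if_neg h1, if_pos h2]
        simp [mul_assoc, mul_comm, mul_left_comm, neg_mul, mul_neg, neg_neg]
      · simp only [if_neg h1, if_neg h2]
        simp [mul_assoc, mul_comm, mul_left_comm, neg_mul, mul_neg, neg_neg]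

lemma perm_liftable : M.IsLiftable (perm cs) := by
  intro i j
  ext ⟨t, ε⟩
  · rw [perm_mul_pow]
    simp [cs.simple_mul_simple_pow i j]
  · rw [perm_mul_pow]
    set m := M i j with hm
    have hcm : (s i * s j) ^ m = 1 := cs.simple_mul_simple_pow i j
    have hper : ∀ a : ℕ, (s i * s j) ^ (m + a) = (s i * s j) ^ a := by
      intro a; rw [pow_add, hcm, one_mul]
    have : (∏ a ∈ Finset.range (2 * m),
        (if (s i * s j) ^ a * t = s j then (-1 : ℤˣ) else 1)) = 1 := by
      rw [(by ring : 2 * m = m + m), Finset.prod_range_add]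
      simp only [hper]
      exact Int.units_mul_self _
    simp [this]

/-- The sign homomorphism into permutations of `W × ℤˣ`. -/
noncomputable def signHom : W →* Equiv.Perm (W × ℤˣ) :=
  cs.lift ⟨perm cs, perm_liftable cs⟩

lemma signHom_simple (i : B) : signHom cs (s i) = perm cs i :=
  cs.lift_apply_simple (perm_liftable cs) i

lemma signHom_wordProd (ω : List B) (t : W) (ε : ℤˣ) :
    signHom cs (π ω) (t, ε) =
      (π ω * t * (π ω)⁻¹, ((-1 : ℤˣ) ^ (List.count t (ris ω))) * ε) := by
  induction ω generalizing ε with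
  | nil => simp [rightInvSeq]
  | cons i ω ih =>
    rw [cs.wordProd_cons, map_mul, Equiv.Perm.mul_apply, ih, signHom_simple, perm_apply]
    have hπc : s i * (π ω * t * (π ω)⁻¹) * s i = (s i * π ω) * t * (s i * π ω)⁻¹ := by
      rw [mul_inv_rev, cs.inv_simple]; group
    have hris : ris (i :: ω) = ((π ω)⁻¹ * s i * π ω) :: ris ω := rfl
    rw [hπc, hris, List.count_cons]
    by_cases h : (π ω)⁻¹ * s i * π ω = t
    · have hc2 : π ω * t * (π ω)⁻¹ = s i := by rw [← h]; group
      rw [if_pos hc2]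
      have hbeq : (((π ω)⁻¹ * s i * π ω) == t) = true := by
        simpa using h
      rw [hbeq]
      simp [pow_succ, mul_assoc, mul_comm, mul_left_comm, neg_mul, mul_neg, neg_neg]
    · have hc2 : ¬(π ω * t * (π ω)⁻¹ = s i) := by
        intro hh
        apply h
        rw [← hh]; group
      rw [if_neg hc2]
      have hbeq : (((π ω)⁻¹ * s i * π ω) == t) = false := by
        simpa using h
      rw [hbeq]
      simp

/-- The sign of `t` at `w`. -/
noncomputable def eta (w t : W) : ℤˣ := (signHom cs w (t, 1)).2

lemma signHom_apply (w t : W) (ε : ℤˣ) :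
    signHom cs w (t, ε) = (w * t * w⁻¹, eta cs w t * ε) := by
  obtain ⟨ω, _, rfl⟩ := cs.exists_reduced_word' w
  rw [signHom_wordProd]
  unfold eta
  rw [signHom_wordProd]
  simp

lemma eta_eq_pow_count (ω : List B) (t : W) :
    eta cs (π ω) t = (-1 : ℤˣ) ^ (List.count t (ris ω)) := by
  unfold eta
  rw [signHom_wordProd]
  simp

lemma signHom_refl_self {t : W} (ht : cs.IsReflection t) (ε : ℤˣ) :
    signHom cs t (t, ε) = (t, -ε) := by
  obtain ⟨v, i, rfl⟩ := ht
  set t := v * s i * v⁻¹ with hter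
  have hcomp : signHom cs t (t, ε)
      = signHom cs v (perm cs i (signHom cs v⁻¹ (t, ε))) := by
    conv_lhs => rw [hter]
    rw [map_mul, map_mul, ← signHom_simple]
    rw [Equiv.Perm.mul_apply, Equiv.Perm.mul_apply]
  have e1 : ∀ δ : ℤˣ, signHom cs v⁻¹ (t, δ) = (s i, eta cs v⁻¹ t * δ) := by
    intro δ
    have hfst : v⁻¹ * t * (v⁻¹)⁻¹ = s i := by rw [inv_inv, hter]; group
    rw [signHom_apply, hfst]
  have e2 : perm cs i ((s i : W), eta cs v⁻¹ t * ε) = (s i, -(eta cs v⁻¹ t * ε)) := by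
    rw [perm_apply, if_pos rfl]
    rw [cs.simple_mul_simple_self, one_mul]
  have e3 : ∀ δ : ℤˣ, signHom cs v ((s i : W), δ) = (t, eta cs v (s i) * δ) := by
    intro δ
    rw [signHom_apply, hter]
  have hinv : eta cs v (s i) * eta cs v⁻¹ t = 1 := by
    have h0 : signHom cs v (signHom cs v⁻¹ (t, (1 : ℤˣ))) = (t, 1) := by
      rw [← Equiv.Perm.mul_apply, ← map_mul, mul_inv_cancel, map_one]
      rfl
    rw [e1 1, e3 (eta cs v⁻¹ t * 1)] at h0
    have h2 : eta cs v (s i) * (eta cs v⁻¹ t * 1) = 1 := congrArg Prod.snd h0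
    rwa [mul_one] at h2
  rw [hcomp, e1 ε, e2, e3 (-(eta cs v⁻¹ t * ε))]
  have : eta cs v (s i) * -(eta cs v⁻¹ t * ε) = -ε := by
    rw [mul_neg, ← mul_assoc, hinv, one_mul]
  rw [this]

lemma eta_mul_refl {w t : W} (ht : cs.IsReflection t) :
    eta cs (w * t) t = - eta cs w t := by
  unfold eta
  have h1 : signHom cs (w * t) (t, (1 : ℤˣ)) = signHom cs w (signHom cs t (t, 1)) := by
    rw [map_mul, Equiv.Perm.mul_apply]
  rw [h1, signHom_refl_self cs ht, signHom_apply, signHom_apply]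
  simp

/-- Strong exchange. -/
lemma strong_exchange {w t : W} {ω : List B} (hω : cs.IsReduced ω) (hπ : π ω = w)
    (ht : cs.IsReflection t) (hl : ℓ (w * t) < ℓ w) : t ∈ ris ω := by
  by_contra hmem
  have hcount : List.count t (ris ω) = 0 := List.count_eq_zero_of_not_mem hmem
  have heta : eta cs w t = 1 := by
    rw [← hπ, eta_eq_pow_count, hcount, pow_zero]
  have heta2 : eta cs (w * t) t = -1 := by
    rw [eta_mul_refl cs ht, heta]
  obtain ⟨α, hα, hwα⟩ := cs.exists_reduced_word' (w * t)
  have hcount2 : (-1 : ℤˣ) ^ (List.count t (ris α)) = -1 := by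
    rw [← eta_eq_pow_count, ← hwα, heta2]
  have hodd : List.count t (ris α) ≠ 0 := by
    intro h
    rw [h, pow_zero] at hcount2
    exact absurd hcount2 (by decide)
  have hmem2 : t ∈ ris α := List.count_pos_iff.mp (Nat.pos_of_ne_zero hodd)
  have hinv := cs.isRightInversion_of_mem_rightInvSeq hα hmem2
  rw [← hwα] at hinv
  have : ℓ (w * t * t) < ℓ (w * t) := hinv.2
  rw [mul_assoc, ht.mul_self, mul_one] at this
  omega

lemma exchange_erase {w t : W} {ω : List B} (hω : cs.IsReduced ω) (hπ : π ω = w)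
    (ht : cs.IsReflection t) (hl : ℓ (w * t) < ℓ w) :
    ∃ j < ω.length, w * t = π (ω.eraseIdx j) := by
  have hmem := strong_exchange cs hω hπ ht hl
  obtain ⟨j, hj, hjt⟩ := List.mem_iff_getElem.mp hmem
  rw [cs.length_rightInvSeq] at hj
  refine ⟨j, hj, ?_⟩
  rw [← hπ, ← cs.wordProd_mul_getD_rightInvSeq ω j]
  congr 1
  rw [List.getD_eq_getElem _ 1 (by rw [cs.length_rightInvSeq]; exact hj)]
  exact hjt.symm

/-- Left exchange, in split form relative to a length-additive factorization. -/
lemma left_split {w v y : W} (i : B) (hfac : w = v * y) (hadd : ℓ w = ℓ v + ℓ y)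
    (hd : ℓ (s i * w) < ℓ w) :
    (∃ a : W, s i * w = a * y ∧ ℓ a < ℓ v) ∨ (∃ y' : W, s i * w = v * y' ∧ ℓ y' < ℓ y) := by
  obtain ⟨ρ, hρ, hv⟩ := cs.exists_reduced_word' v
  obtain ⟨γ, hγ, hy⟩ := cs.exists_reduced_word' y
  have hρl : ρ.length = ℓ v := by rw [hv]; exact hρ.symm
  have hγl : γ.length = ℓ y := by rw [hy]; exact hγ.symm
  set ω : List B := γ.reverse ++ ρ.reverse with hωdef
  have hπω : π ω = w⁻¹ := by
    rw [hωdef, cs.wordProd_append, cs.wordProd_reverse, cs.wordProd_reverse, ← hv, ← hy, hfac,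
      mul_inv_rev]
  have hωred : cs.IsReduced ω := by
    unfold CoxeterSystem.IsReduced
    rw [hπω, cs.length_inv, hadd]
    simp [hωdef, hρl, hγl]
    omega
  have hlen : ℓ (w⁻¹ * s i) < ℓ w⁻¹ := by
    have : (s i * w)⁻¹ = w⁻¹ * s i := by rw [mul_inv_rev, cs.inv_simple]
    rw [cs.length_inv w, ← this, cs.length_inv]
    exact hd
  obtain ⟨j, hj, hje⟩ := exchange_erase cs hωred hπω (cs.isReflection_simple i) hlen
  rw [hωdef] at hje hj
  simp only [List.length_append, List.length_reverse] at hj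
  by_cases hcase : j < γ.reverse.length
  · -- deletion in the y part
    right
    rw [List.eraseIdx_append_of_lt_length hcase, cs.wordProd_append] at hje
    set b := π (γ.reverse.eraseIdx j) with hb
    have hsw : s i * w = v * b⁻¹ := by
      have := congrArg (fun x => x⁻¹) hje
      simp only [mul_inv_rev, inv_inv] at this
      rw [cs.wordProd_reverse, inv_inv, ← hv, cs.inv_simple] at this
      exact this
    refine ⟨b⁻¹, hsw, ?_⟩
    have : ℓ b ≤ (γ.reverse.eraseIdx j).length := by
      rw [hb]; exact cs.length_wordProd_le _
    have hle : (γ.reverse.eraseIdx j).length + 1 = γ.reverse.length :=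
      List.length_eraseIdx_add_one hcase
    rw [cs.length_inv]
    rw [List.length_reverse] at hle
    omega
  · -- deletion in the v part
    left
    push_neg at hcase
    rw [List.eraseIdx_append_of_length_le hcase, cs.wordProd_append] at hje
    set d := π (ρ.reverse.eraseIdx (j - γ.reverse.length)) with hd2
    have hsw : s i * w = d⁻¹ * y := by
      have := congrArg (fun x => x⁻¹) hje
      simp only [mul_inv_rev, inv_inv] at this
      rw [cs.wordProd_reverse, inv_inv, ← hy, cs.inv_simple] at this
      exact this
    refine ⟨d⁻¹, hsw, ?_⟩
    have hjlt : j - γ.reverse.length < ρ.reverse.length := by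
      simp only [List.length_reverse] at hcase ⊢
      omega
    have hlend : ℓ d ≤ (ρ.reverse.eraseIdx (j - γ.reverse.length)).length := by
      rw [hd2]; exact cs.length_wordProd_le _
    have hle := List.length_eraseIdx_add_one hjlt
    rw [cs.length_inv]
    simp only [List.length_reverse] at hle hlend
    omega

/-- If every simple reflection is a left descent of `u`, then every `v` is a
"suffix" of `u`: `ℓ(v⁻¹ u) = ℓ(u) − ℓ(v)`. -/
lemma max_prefix (u : W) (hu : ∀ i : B, ℓ (s i * u) < ℓ u) :
    ∀ v : W, ℓ (v⁻¹ * u) + ℓ v = ℓ u := by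
  suffices h : ∀ n : ℕ, ∀ v : W, ℓ v = n → ℓ (v⁻¹ * u) + ℓ v = ℓ u by
    intro v; exact h (ℓ v) v rfl
  intro n
  induction n using Nat.strong_induction_on with
  | _ n ih =>
    intro v hv
    by_cases hv1 : v = 1
    · simp [hv1]
    · obtain ⟨i, hi⟩ := cs.exists_leftDescent_of_ne_one hv1
      set v₁ := s i * v with hv₁def
      have hv₁len : ℓ v₁ + 1 = ℓ v := by
        rcases cs.length_simple_mul v i with h | h
        · exact absurd hi (by unfold CoxeterSystem.IsLeftDescent; omega)
        · exact h
      have hIH : ℓ (v₁⁻¹ * u) + ℓ v₁ = ℓ u := ih (ℓ v₁) (by omega) v₁ rfl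
      set y := v₁⁻¹ * u with hydef
      have hfac : u = v₁ * y := by rw [hydef]; group
      have hadd : ℓ u = ℓ v₁ + ℓ y := by omega
      rcases left_split cs i hfac hadd (hu i) with ⟨a, ha, hla⟩ | ⟨y', hy', hly'⟩
      · exfalso
        have hvv : s i * u = v * y := by
          rw [hfac, ← mul_assoc, hv₁def, cs.simple_mul_simple_cancel_left]
        rw [hvv] at ha
        have : v = a := mul_right_cancel ha
        rw [← this] at hla
        omega
      · have hveq : v⁻¹ * u = y' := by
          have hvrec : v = s i * v₁ := by
            rw [hv₁def, ← mul_assoc, cs.simple_mul_simple_self, one_mul]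
          rw [hvrec, mul_inv_rev, cs.inv_simple, mul_assoc, hy', ← mul_assoc,
            inv_mul_cancel, one_mul]
        have htri : ℓ u ≤ ℓ v + ℓ (v⁻¹ * u) := by
          have := cs.length_mul_le v (v⁻¹ * u)
          rw [← mul_assoc, mul_inv_cancel, one_mul] at this
          exact this
        rw [hveq]
        rw [hveq] at htri
        omega

end BGGAux

/-- The Bruhat order on a Coxeter group: `u < w` iff `w` can be obtained from `u`
by successively multiplying on the right by reflections, each step increasing the
length. -/
def bruhatLT {B W : Type*} [Group W] {M : CoxeterMatrix B} (cs : CoxeterSystem M W)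
    (u w : W) : Prop :=
  Relation.TransGen
    (fun x y => ∃ t : W, cs.IsReflection t ∧ y = x * t ∧ cs.length x < cs.length y) u w

/-- In a finite Coxeter group `W` with longest element `w₀`, any element `w` with
`ℓ(w) ≤ ℓ(w₀) - 2` has at least two distinct covers in the Bruhat order: there exist
`w₁ ≠ w₂` with `w < w₁`, `w < w₂` and `ℓ(w₁) = ℓ(w₂) = ℓ(w) + 1`
(Lemma 10.3 of Bernstein--Gelfand--Gelfand). -/
theorem stmt10 {B W : Type*} [Group W] [Finite W] {M : CoxeterMatrix B}
    (cs : CoxeterSystem M W)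
    (w₀ : W) (hw₀ : ∀ v : W, cs.length v ≤ cs.length w₀)
    (w : W) (hw : cs.length w + 2 ≤ cs.length w₀) :
    ∃ w₁ w₂ : W, w₁ ≠ w₂ ∧ bruhatLT cs w w₁ ∧ bruhatLT cs w w₂ ∧
      cs.length w₁ = cs.length w + 1 ∧ cs.length w₂ = cs.length w + 1 := by
  -- every simple reflection is a left descent of w₀
  have hld : ∀ i : B, cs.length (cs.simple i * w₀) < cs.length w₀ := by
    intro i
    exact lt_of_le_of_ne (hw₀ _) (cs.length_simple_mul_ne w₀ i)
  have Hdual : ∀ v : W, cs.length (v⁻¹ * w₀) + cs.length v = cs.length w₀ :=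
    BGGAux.max_prefix cs w₀ hld
  -- w₀ is an involution
  have hw0sq : w₀ * w₀ = 1 := by
    have := Hdual w₀⁻¹
    rw [inv_inv, cs.length_inv] at this
    have h0 : cs.length (w₀ * w₀) = 0 := by omega
    exact cs.length_eq_zero_iff.mp h0
  have hw0inv : w₀⁻¹ = w₀ := inv_eq_of_mul_eq_one_right hw0sq
  have Hr : ∀ x : W, cs.length (x * w₀) + cs.length x = cs.length w₀ := by
    intro x
    have := Hdual x⁻¹
    rwa [inv_inv, cs.length_inv] at this
  -- pass to u = w * w₀
  set u := w * w₀ with hudef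
  have hu : cs.length u + cs.length w = cs.length w₀ := Hr w
  set n := cs.length u with hndef
  have hn2 : 2 ≤ n := by omega
  obtain ⟨ω, hω, hπ⟩ := cs.exists_reduced_word' u
  have hωlen : ω.length = n := by rw [hndef, hπ]; exact hω.symm
  -- the two co-covers of u
  have hmem : ∀ j, j < n → (cs.rightInvSeq ω).getD j 1 ∈ cs.rightInvSeq ω := by
    intro j hj
    rw [List.getD_eq_getElem _ 1 (by rw [cs.length_rightInvSeq]; omega)]
    exact List.getElem_mem _
  set ta := (cs.rightInvSeq ω).getD 0 1 with hta
  set tb := (cs.rightInvSeq ω).getD (n - 1) 1 with htb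
  have hmema : ta ∈ cs.rightInvSeq ω := hmem 0 (by omega)
  have hmemb : tb ∈ cs.rightInvSeq ω := hmem (n - 1) (by omega)
  have hrefla : cs.IsReflection ta := cs.isReflection_of_mem_rightInvSeq ω hmema
  have hreflb : cs.IsReflection tb := cs.isReflection_of_mem_rightInvSeq ω hmemb
  have htane : ta ≠ tb := by
    rw [hta, htb]
    rw [List.getD_eq_getElem _ 1 (by rw [cs.length_rightInvSeq]; omega),
      List.getD_eq_getElem _ 1 (by rw [cs.length_rightInvSeq]; omega)]
    intro h
    have hnd := hω.nodup_rightInvSeq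
    have := (List.Nodup.getElem_inj_iff hnd).mp h
    omega
  -- lengths of u * ta and u * tb
  have hua : cs.length (u * ta) = n - 1 := by
    have h1 : u * ta = cs.wordProd (ω.eraseIdx 0) := by
      rw [hta, hπ]; exact cs.wordProd_mul_getD_rightInvSeq ω 0
    rw [h1, List.eraseIdx_zero, ← List.drop_one]
    have := hω.drop 1
    rw [this]
    rw [List.length_drop, hωlen]
  have hub : cs.length (u * tb) = n - 1 := by
    have h1 : u * tb = cs.wordProd (ω.eraseIdx (n - 1)) := by
      rw [htb, hπ]; exact cs.wordProd_mul_getD_rightInvSeq ω (n - 1)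
    have h2 : ω.eraseIdx (n - 1) = ω.take (n - 1) := by
      rw [List.eraseIdx_eq_take_drop_succ]
      have : ω.drop (n - 1 + 1) = [] := by
        apply List.drop_eq_nil_of_le
        omega
      rw [this, List.append_nil]
    rw [h1, h2]
    have := hω.take (n - 1)
    rw [this]
    rw [List.length_take, hωlen]
    omega
  -- build the covers
  have build : ∀ t : W, cs.IsReflection t → cs.length (u * t) = n - 1 →
      bruhatLT cs w (u * t * w₀) ∧ cs.length (u * t * w₀) = cs.length w + 1 := by
    intro t ht hlt
    have hτrefl : cs.IsReflection (w₀ * t * w₀) := by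
      have := ht.conj w₀
      rwa [hw0inv] at this
    have hwmul : w * (w₀ * t * w₀) = u * t * w₀ := by
      rw [hudef]; group
    have hlen : cs.length (u * t * w₀) = cs.length w + 1 := by
      have := Hr (u * t)
      omega
    constructor
    · apply Relation.TransGen.single
      exact ⟨w₀ * t * w₀, hτrefl, hwmul.symm, by omega⟩
    · exact hlen
  obtain ⟨hba, hbc⟩ := build ta hrefla hua
  obtain ⟨hbb, hbd⟩ := build tb hreflb hub
  refine ⟨u * ta * w₀, u * tb * w₀, ?_, hba, hbb, hbc, hbd⟩
  intro h
  apply htane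
  have h1 := mul_right_cancel h
  exact mul_left_cancel h1
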